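/- Define h̃(w) = deg_t(w) + deg_s(w) for words w over Ψ, where deg_t and deg_s count the occurrences of the letters t and s. If two words w_1, w_2 over Ψ have equal images in the algebra H and this common image is nonzero, then h̃(w_1) = h̃(w_2). -/

import Mathlib

noncomputable section

/-- Direction of the head movement of the Turing machine. -/
inductive Dir
  | L
  | R
deriving DecidableEq

/-- The instruction table of Minsky's universal Turing machine: for a state `i` and a color `j`,
`instr i j` is `some (d, q, p)` where `d` is the direction of the head movement, `q` the new
state and `p` the new color of the current cell; it is `none` exactly for the STOP pair
`(4, 3)`. -/
def instr : Fin 7 → Fin 4 → Option (Dir × Fin 7 × Fin 4) := fun i j =>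
  match i.val, j.val with
  | 0, 0 => some (Dir.L, 4, 1)
  | 0, 1 => some (Dir.L, 1, 3)
  | 0, 2 => some (Dir.R, 0, 0)
  | 0, 3 => some (Dir.R, 0, 1)
  | 1, 0 => some (Dir.L, 1, 2)
  | 1, 1 => some (Dir.L, 1, 3)
  | 1, 2 => some (Dir.R, 0, 0)
  | 1, 3 => some (Dir.L, 1, 3)
  | 2, 0 => some (Dir.R, 2, 2)
  | 2, 1 => some (Dir.R, 2, 1)
  | 2, 2 => some (Dir.R, 2, 0)
  | 2, 3 => some (Dir.L, 4, 1)
  | 3, 0 => some (Dir.R, 3, 2)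
  | 3, 1 => some (Dir.R, 3, 1)
  | 3, 2 => some (Dir.R, 3, 0)
  | 3, 3 => some (Dir.L, 4, 0)
  | 4, 0 => some (Dir.L, 5, 2)
  | 4, 1 => some (Dir.L, 4, 1)
  | 4, 2 => some (Dir.L, 4, 0)
  | 4, 3 => none
  | 5, 0 => some (Dir.L, 5, 2)
  | 5, 1 => some (Dir.L, 5, 1)
  | 5, 2 => some (Dir.L, 6, 2)
  | 5, 3 => some (Dir.R, 2, 1)
  | 6, 0 => some (Dir.R, 0, 3)
  | 6, 1 => some (Dir.R, 6, 3)
  | 6, 2 => some (Dir.R, 6, 2)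
  | 6, 3 => some (Dir.R, 3, 1)
  | _, _ => none

/-- The alphabet `Ψ = {t, s, a_0, …, a_3, Q_0, …, Q_6, P_0, …, P_3, L, R}`. -/
inductive Psi
  | t
  | s
  | a (k : Fin 4)
  | Q (i : Fin 7)
  | P (j : Fin 4)
  | L
  | R
deriving DecidableEq, Fintype

/-- The image in the free algebra of a word over the alphabet `Ψ`. -/
def wrd (K : Type*) [Field K] (l : List Psi) : FreeAlgebra K Psi :=
  (l.map (FreeAlgebra.ι K)).prod

open Psi in
/-- The defining relations of the algebra `H`. -/
inductive HRel (K : Type*) [Field K] : FreeAlgebra K Psi → FreeAlgebra K Psi → Prop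
  | rel1 (k : Fin 4) :
      HRel K (wrd K [t, L, a k]) (wrd K [L, t, a k])
  | rel2 (k l : Fin 4) :
      HRel K (wrd K [t, a k, a l]) (wrd K [a k, t, a l])
  | rel9 :
      HRel K (wrd K [s, R]) (wrd K [R, s])
  | rel8 (k : Fin 4) :
      HRel K (wrd K [s, a k]) (wrd K [a k, s])
  | rel3 (i : Fin 7) (j : Fin 4) (q : Fin 7) (p : Fin 4) (k : Fin 4)
      (h : instr i j = some (Dir.L, q, p)) :
      HRel K (wrd K [t, a k, Q i, P j]) (wrd K [Q q, P k, a p, s])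
  | rel5 (i : Fin 7) (j : Fin 4) (q : Fin 7) (p : Fin 4)
      (h : instr i j = some (Dir.L, q, p)) :
      HRel K (wrd K [t, L, Q i, P j]) (wrd K [L, Q q, P 0, a p, s])
  | rel4 (i : Fin 7) (j : Fin 4) (q : Fin 7) (p : Fin 4) (l k : Fin 4)
      (h : instr i j = some (Dir.R, q, p)) :
      HRel K (wrd K [t, a l, Q i, P j, a k]) (wrd K [a l, a p, Q q, P k, s])
  | rel4b (i : Fin 7) (j : Fin 4) (q : Fin 7) (p : Fin 4) (k : Fin 4)
      (h : instr i j = some (Dir.R, q, p)) :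
      HRel K (wrd K [t, L, Q i, P j, a k]) (wrd K [L, a p, Q q, P k, s])
  | rel6 (i : Fin 7) (j : Fin 4) (q : Fin 7) (p : Fin 4) (l : Fin 4)
      (h : instr i j = some (Dir.R, q, p)) :
      HRel K (wrd K [t, a l, Q i, P j, R]) (wrd K [a l, a p, Q q, P 0, R, s])
  | rel6b (i : Fin 7) (j : Fin 4) (q : Fin 7) (p : Fin 4)
      (h : instr i j = some (Dir.R, q, p)) :
      HRel K (wrd K [t, L, Q i, P j, R]) (wrd K [L, a p, Q q, P 0, R, s])
  | rel7 :
      HRel K (wrd K [Q 4, P 3]) 0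

/-- The algebra `H`: the quotient of the free associative unital `K`-algebra on `Ψ` by the
two-sided ideal generated by the defining relations. -/
abbrev AlgH (K : Type*) [Field K] := RingQuot (HRel K)

/-- The image in `H` of a word over the alphabet `Ψ`. -/
def mkw (K : Type*) [Field K] (l : List Psi) : AlgH K :=
  RingQuot.mkAlgHom K (HRel K) (wrd K l)

/-- The image of the letter `t` in `H`. -/
def tEl (K : Type*) [Field K] : AlgH K := mkw K [Psi.t]

/-- The image of the letter `s` in `H`. -/
def sEl (K : Type*) [Field K] : AlgH K := mkw K [Psi.s]

/-- `h̃(w) = deg_t(w) + deg_s(w)`: the total number of occurrences of the letters `t` and `s`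
in the word `w`. -/
def htil (w : List Psi) : ℕ := w.count Psi.t + w.count Psi.s


/-- The degree of a letter: `1` for `t` and `s`, `0` otherwise. -/
def degPsi : Psi → ℕ
  | Psi.t => 1
  | Psi.s => 1
  | _ => 0

lemma htil_eq_sum (w : List Psi) : htil w = (w.map degPsi).sum := by
  induction w with
  | nil => rfl
  | cons x l ih =>
    simp only [htil, List.count_cons, List.map_cons, List.sum_cons] at *
    cases x <;> simp [degPsi] <;> omega

/-- The grading algebra hom on the free algebra. -/
def Phi (K : Type*) [Field K] : FreeAlgebra K Psi →ₐ[K] AddMonoidAlgebra (AlgH K) ℕ :=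
  FreeAlgebra.lift K fun x =>
    AddMonoidAlgebra.single (degPsi x) (RingQuot.mkAlgHom K (HRel K) (FreeAlgebra.ι K x))

lemma Phi_wrd (K : Type*) [Field K] (l : List Psi) :
    Phi K (wrd K l) = AddMonoidAlgebra.single (htil l) (mkw K l) := by
  induction l with
  | nil =>
    simp only [wrd, List.map_nil, List.prod_nil, map_one, htil, List.count_nil, mkw]
    exact AddMonoidAlgebra.one_def
  | cons x l ih =>
    have hw : wrd K (x :: l) = FreeAlgebra.ι K x * wrd K l := by
      simp [wrd]
    rw [hw, map_mul, ih, Phi, FreeAlgebra.lift_ι_apply,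
      AddMonoidAlgebra.single_mul_single]
    congr 1
    · rw [htil_eq_sum, htil_eq_sum]; simp
    · rw [mkw, mkw, hw, map_mul]

lemma Phi_rel (K : Type*) [Field K] ⦃x y : FreeAlgebra K Psi⦄ (h : HRel K x y) :
    Phi K x = Phi K y := by
  have key : ∀ l₁ l₂ : List Psi, htil l₁ = htil l₂ → HRel K (wrd K l₁) (wrd K l₂) →
      Phi K (wrd K l₁) = Phi K (wrd K l₂) := by
    intro l₁ l₂ hh hr
    rw [Phi_wrd, Phi_wrd, hh, mkw, mkw, RingQuot.mkAlgHom_rel K hr]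
  cases h with
  | rel7 =>
    rw [map_zero, Phi_wrd]
    have : mkw K [Psi.Q 4, Psi.P 3] = 0 := by
      rw [mkw, RingQuot.mkAlgHom_rel K (HRel.rel7), map_zero]
    rw [this, AddMonoidAlgebra.single_zero]
  | rel1 k => exact key _ _ (by simp [htil_eq_sum, degPsi]) (HRel.rel1 k)
  | rel2 k l => exact key _ _ (by simp [htil_eq_sum, degPsi]) (HRel.rel2 k l)
  | rel9 => exact key _ _ (by simp [htil_eq_sum, degPsi]) HRel.rel9
  | rel8 k => exact key _ _ (by simp [htil_eq_sum, degPsi]) (HRel.rel8 k)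
  | rel3 i j q p k hi => exact key _ _ (by simp [htil_eq_sum, degPsi]) (HRel.rel3 i j q p k hi)
  | rel5 i j q p hi => exact key _ _ (by simp [htil_eq_sum, degPsi]) (HRel.rel5 i j q p hi)
  | rel4 i j q p l k hi => exact key _ _ (by simp [htil_eq_sum, degPsi]) (HRel.rel4 i j q p l k hi)
  | rel4b i j q p k hi => exact key _ _ (by simp [htil_eq_sum, degPsi]) (HRel.rel4b i j q p k hi)
  | rel6 i j q p l hi => exact key _ _ (by simp [htil_eq_sum, degPsi]) (HRel.rel6 i j q p l hi)
  | rel6b i j q p hi => exact key _ _ (by simp [htil_eq_sum, degPsi]) (HRel.rel6b i j q p hi)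

/-- The grading map descends to `H`. -/
def PhiBar (K : Type*) [Field K] : AlgH K →ₐ[K] AddMonoidAlgebra (AlgH K) ℕ :=
  RingQuot.liftAlgHom K ⟨Phi K, fun _ _ h => Phi_rel K h⟩

lemma PhiBar_mkw (K : Type*) [Field K] (l : List Psi) :
    PhiBar K (mkw K l) = AddMonoidAlgebra.single (htil l) (mkw K l) := by
  rw [mkw, PhiBar, RingQuot.liftAlgHom_mkAlgHom_apply]
  exact Phi_wrd K l

/-- If two words over `Ψ` have equal images in the algebra `H` and this
common image is nonzero, then `h̃(w₁) = h̃(w₂)`. -/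
theorem htil_eq_of_eq_of_ne_zero (K : Type*) [Field K] (w₁ w₂ : List Psi)
    (h : mkw K w₁ = mkw K w₂) (hne : mkw K w₁ ≠ 0) : htil w₁ = htil w₂ := by
  by_contra hd
  have h2 := congrArg (PhiBar K) h
  rw [PhiBar_mkw, PhiBar_mkw] at h2
  have h3 : (Finsupp.single (htil w₁) (mkw K w₁) : ℕ →₀ AlgH K) =
      Finsupp.single (htil w₂) (mkw K w₂) := congrArg AddMonoidAlgebra.coeff h2
  rcases (Finsupp.single_eq_single_iff _ _ _ _).mp h3 with ⟨he, _⟩ | ⟨he, _⟩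
  · exact hd he
  · exact hne he
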